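/- Along any solution of the closed-loop system θ̇ = ω, M ω̇ = −D ω − (∇U(θ) − ∇U(θ*)) + c·((J′)^{-1}(λ) − (J′)^{-1}(λ*)), k λ̇ = −c^⊤ ω, the Hamiltonian H(θ, ω, λ) = U(θ) − U(θ*) − ∇U(θ*)^⊤(θ − θ*) + ½ ω^⊤ M ω + k(I(λ) − I(λ*) − I′(λ*)(λ − λ*)) satisfies dH/dt = −ω^⊤ D ω ≤ 0. -/

import Mathlib

open Filter Topology

/-- **Dissipation identity for the Hamiltonian.**
Along any solution of
`θ̇ = ω`, `M ω̇ = -D ω - (∇U(θ) - ∇U(θ⋆)) + c ((J')⁻¹(λ) - (J')⁻¹(λ⋆))`,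
`k λ̇ = -cᵀ ω`, the Hamiltonian
`H = U(θ) - U(θ⋆) - ∇U(θ⋆)ᵀ(θ - θ⋆) + ½ ωᵀ M ω + k (I(λ) - I(λ⋆) - I'(λ⋆)(λ - λ⋆))`
satisfies `Ḣ = -ωᵀ D ω ≤ 0`.  Here `g = (J')⁻¹ = I'`. -/
theorem gather_broadcast_stmt9
    {N : ℕ}
    (U : (Fin N → ℝ) → ℝ) (gradU : (Fin N → ℝ) → Fin N → ℝ)
    (g I : ℝ → ℝ) (hI : ∀ x : ℝ, HasDerivAt I (g x) x)
    (M D c : Fin N → ℝ) (hM : ∀ i, 0 ≤ M i) (hD : ∀ i, 0 ≤ D i)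
    (k : ℝ) (hk : 0 < k)
    (θs : Fin N → ℝ) (lams : ℝ)
    -- a solution (θ, ω, λ) of the closed loop, with ω' the acceleration
    (θ ω ω' : ℝ → Fin N → ℝ) (lam : ℝ → ℝ)
    (hθ : ∀ i, ∀ t : ℝ, HasDerivAt (fun s => θ s i) (ω t i) t)
    (hω : ∀ i, ∀ t : ℝ, HasDerivAt (fun s => ω s i) (ω' t i) t)
    (hMω : ∀ i, ∀ t : ℝ, M i * ω' t i =
      -(D i * ω t i) - (gradU (θ t) i - gradU θs i) + c i * (g (lam t) - g lams))
    (hlam : ∀ t : ℝ, HasDerivAt lam (-(∑ i, c i * ω t i) / k) t)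
    -- chain rule for the potential along the trajectory
    (hUchain : ∀ t : ℝ, HasDerivAt (fun s => U (θ s)) (∑ i, gradU (θ t) i * ω t i) t)
    (H : ℝ → ℝ)
    (hH : ∀ t : ℝ, H t =
      U (θ t) - U θs - (∑ i, gradU θs i * (θ t i - θs i))
      + (1 / 2) * ∑ i, M i * (ω t i) ^ 2
      + k * (I (lam t) - I lams - g lams * (lam t - lams))) :
    ∀ t : ℝ, HasDerivAt H (-(∑ i, D i * (ω t i) ^ 2)) t ∧
      -(∑ i, D i * (ω t i) ^ 2) ≤ 0 := by

  have hHfun : H = fun t =>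
      U (θ t) - U θs - (∑ i, gradU θs i * (θ t i - θs i))
      + (1 / 2) * ∑ i, M i * (ω t i) ^ 2
      + k * (I (lam t) - I lams - g lams * (lam t - lams)) := funext hH
  intro t
  constructor
  · rw [hHfun]
    have h1 : HasDerivAt (fun s => ∑ i, gradU θs i * (θ s i - θs i))
        (∑ i, gradU θs i * ω t i) t := by
      apply HasDerivAt.fun_sum
      intro i _
      exact ((hθ i t).sub_const _).const_mul _
    have h2 : HasDerivAt (fun s => ∑ i, M i * (ω s i) ^ 2)
        (∑ i, M i * (2 * ω t i ^ 1 * ω' t i)) t := by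
      apply HasDerivAt.fun_sum
      intro i _
      exact ((hω i t).pow 2).const_mul _
    have h3 : HasDerivAt (fun s => I (lam s)) (g (lam t) * (-(∑ i, c i * ω t i) / k)) t :=
      (hI (lam t)).comp t (hlam t)
    have h4 : HasDerivAt (fun s => g lams * (lam s - lams))
        (g lams * (-(∑ i, c i * ω t i) / k)) t := ((hlam t).sub_const _).const_mul _
    have hbig := ((((hUchain t).sub_const (U θs)).sub h1).add (h2.const_mul (1/2 : ℝ))).add
      (((h3.sub_const (I lams)).sub h4).const_mul k)
    refine hbig.congr_deriv ?_
    have hsum : ∑ i, M i * (2 * ω t i ^ 1 * ω' t i)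
        = ∑ i, (-(2 * (D i * ω t i ^ 2)) - 2 * (gradU (θ t) i * ω t i)
            + 2 * (gradU θs i * ω t i) + (g (lam t) - g lams) * (2 * (c i * ω t i))) := by
      apply Finset.sum_congr rfl
      intro i _
      have : M i * (2 * ω t i ^ 1 * ω' t i) = 2 * (ω t i * (M i * ω' t i)) := by ring
      rw [this, hMω i t]
      ring
    rw [hsum]
    simp only [Finset.sum_add_distrib, Finset.sum_sub_distrib, ← Finset.mul_sum,
      Finset.sum_neg_distrib]
    field_simp
    ring
  · apply neg_nonpos_of_nonneg
    apply Finset.sum_nonneg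
    intro i _
    exact mul_nonneg (hD i) (sq_nonneg _)
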